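/- Let Ψ be a channel with 0 ≤ Ψ(ρ) in Löwner order for all positive ρ, and suppose Ψ(σ_A ⊗ P) = σ_A ⊗ P where P = |ψ⟩⟨ψ| is a rank-one projection on B and σ_A = Σₖ pₖ|αₖ⟩⟨αₖ| with pₖ > 0. Then for each k there exists a positive operator σ_{ψ,k} on A with tr σ_{ψ,k} = 1 (after normalization) such that Ψ(|αₖ⟩⟨αₖ| ⊗ P) = σ_{ψ,k} ⊗ P. -/

import Mathlib

open Matrix Kronecker ComplexOrder

section FPCAux

variable {n : Type*} [Fintype n] [DecidableEq n]

private lemma fpc_psd_vecMulVec (v : n → ℂ) : (vecMulVec v (star v)).PosSemidef := by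
  rw [Matrix.posSemidef_iff_dotProduct_mulVec]
  constructor
  · ext i j
    simp only [conjTranspose_apply, vecMulVec_apply, Pi.star_apply, star_mul', star_star]
    exact mul_comm _ _
  · intro x
    have h : vecMulVec v (star v) *ᵥ x = (star v ⬝ᵥ x) • v := by
      ext i
      simp only [mulVec, dotProduct, vecMulVec_apply, Pi.star_apply, Pi.smul_apply,
        smul_eq_mul, Finset.sum_mul]
      exact Finset.sum_congr rfl fun l _ => by ring
    rw [h, dotProduct_smul, smul_eq_mul]
    have h2 : star x ⬝ᵥ v = star (star v ⬝ᵥ x) := by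
      simp only [dotProduct, star_sum, Pi.star_apply, star_mul', star_star]
      exact Finset.sum_congr rfl fun l _ => mul_comm _ _
    rw [h2]
    exact mul_star_self_nonneg _

private lemma fpc_psd_smul {A : Matrix n n ℂ} (hA : A.PosSemidef) {c : ℝ} (hc : 0 ≤ c) :
    ((c : ℂ) • A).PosSemidef := by
  rw [Matrix.posSemidef_iff_dotProduct_mulVec]
  constructor
  · have : ((c : ℂ) • A)ᴴ = star (c : ℂ) • Aᴴ := conjTranspose_smul _ _
    rw [Matrix.IsHermitian, this, hA.1.eq, Complex.star_def, Complex.conj_ofReal]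
  · intro x
    rw [smul_mulVec, dotProduct_smul, smul_eq_mul]
    exact mul_nonneg (Complex.zero_le_real.mpr hc) (hA.dotProduct_mulVec_nonneg x)

private lemma fpc_star_ite {c : Prop} [Decidable c] (x y : ℂ) :
    star (if c then x else y) = if c then star x else star y := apply_ite star c x y

private lemma fpc_psd_neg_eq_zero {A : Matrix n n ℂ} (hA : A.PosSemidef)
    (hA' : (-A).PosSemidef) : A = 0 := by
  obtain ⟨B, rfl⟩ : ∃ B : Matrix n n ℂ, A = Bᴴ * B := by
    open scoped MatrixOrder in
    obtain ⟨B, hB⟩ := CStarAlgebra.nonneg_iff_eq_star_mul_self.mp hA.nonneg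
    exact ⟨B, hB⟩
  rw [Matrix.conjTranspose_mul_self_eq_zero]
  have hBv : ∀ x : n → ℂ, B *ᵥ x = 0 := by
    intro x
    have key : star x ⬝ᵥ ((Bᴴ * B) *ᵥ x) = star (B *ᵥ x) ⬝ᵥ (B *ᵥ x) := by
      rw [← mulVec_mulVec, dotProduct_mulVec, vecMul_conjTranspose, star_star]
    have h1 : 0 ≤ star (B *ᵥ x) ⬝ᵥ (B *ᵥ x) := by rw [← key]; exact hA.dotProduct_mulVec_nonneg x
    have h2 : star (B *ᵥ x) ⬝ᵥ (B *ᵥ x) ≤ 0 := by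
      have h3 := hA'.dotProduct_mulVec_nonneg x
      rw [neg_mulVec, dotProduct_neg, key] at h3
      exact neg_nonneg.mp h3
    exact dotProduct_star_self_eq_zero.mp (le_antisymm h2 h1)
  ext i j
  have h5 := congrFun (hBv (Pi.single j 1)) i
  simpa [mulVec_single] using h5

end FPCAux

/-- If a positive trace-preserving linear map Ψ fixes σ_A ⊗ P, where
P = |ψ⟩⟨ψ| is a rank-one projection on B and σ_A = Σₖ pₖ|αₖ⟩⟨αₖ| with pₖ > 0,
then for each k there is a density operator σ_{ψ,k} on A with
Ψ(|αₖ⟩⟨αₖ| ⊗ P) = σ_{ψ,k} ⊗ P. -/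
theorem fixed_point_compression
    {s a b : ℕ}
    (W : Matrix (Fin s) (Fin a × Fin b) ℂ) (hW : Wᴴ * W = 1)
    (Ψ : Matrix (Fin s) (Fin s) ℂ →ₗ[ℂ] Matrix (Fin s) (Fin s) ℂ)
    (hpos : ∀ ρ : Matrix (Fin s) (Fin s) ℂ, ρ.PosSemidef → (Ψ ρ).PosSemidef)
    (htr : ∀ ρ : Matrix (Fin s) (Fin s) ℂ, (Ψ ρ).trace = ρ.trace)
    (ψ : Fin b → ℂ) (hψ : star ψ ⬝ᵥ ψ = 1)
    (P : Matrix (Fin b) (Fin b) ℂ) (hP : P = vecMulVec ψ (star ψ))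
    (p : Fin a → ℝ) (hp : ∀ k, 0 < p k)
    (α : Fin a → (Fin a → ℂ))
    (hα : ∀ k k', star (α k) ⬝ᵥ α k' = if k = k' then 1 else 0)
    (σA : Matrix (Fin a) (Fin a) ℂ)
    (hσA : σA = ∑ k, (p k : ℂ) • vecMulVec (α k) (star (α k)))
    (hfix : Ψ (W * (σA ⊗ₖ P) * Wᴴ) = W * (σA ⊗ₖ P) * Wᴴ) :
    ∀ k : Fin a, ∃ σ' : Matrix (Fin a) (Fin a) ℂ,
      σ'.PosSemidef ∧ σ'.trace = 1 ∧
      Ψ (W * (vecMulVec (α k) (star (α k)) ⊗ₖ P) * Wᴴ)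
        = W * (σ' ⊗ₖ P) * Wᴴ := by
  intro k
  classical
  set X : Matrix (Fin s) (Fin s) ℂ := Ψ (W * (vecMulVec (α k) (star (α k)) ⊗ₖ P) * Wᴴ)
    with hXdef
  -- basic facts about P
  have hPh : Pᴴ = P := by
    rw [hP]; ext i j
    simp only [conjTranspose_apply, vecMulVec_apply, Pi.star_apply, star_mul', star_star]
    exact mul_comm _ _
  have hψ' : (∑ l, star (ψ l) * ψ l) = 1 := by
    simpa [dotProduct] using hψ
  have hPP : P * P = P := by
    rw [hP]; ext i j
    simp only [Matrix.mul_apply, vecMulVec_apply, Pi.star_apply]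
    have h1 : (∑ l, ψ i * star (ψ l) * (ψ l * star (ψ j)))
        = (∑ l, star (ψ l) * ψ l) * (ψ i * star (ψ j)) := by
      rw [Finset.sum_mul]
      exact Finset.sum_congr rfl fun l _ => by ring
    rw [h1, hψ', one_mul]
  -- kronecker of rank-one matrices is rank one
  have hukron : ∀ k', vecMulVec (α k') (star (α k')) ⊗ₖ P
      = vecMulVec (fun q : Fin a × Fin b => α k' q.1 * ψ q.2)
          (star (fun q : Fin a × Fin b => α k' q.1 * ψ q.2)) := by
    intro k'
    ext q q'
    simp only [kroneckerMap_apply, vecMulVec_apply, Pi.star_apply, star_mul', hP]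
    ring
  have hρPpsd : ∀ k', (vecMulVec (α k') (star (α k')) ⊗ₖ P).PosSemidef := by
    intro k'; rw [hukron k']; exact fpc_psd_vecMulVec _
  have hXpsd : X.PosSemidef := hpos _ ((hρPpsd k).mul_mul_conjTranspose_same W)
  -- the projection Q
  set Q : Matrix (Fin s) (Fin s) ℂ := W * ((1 : Matrix (Fin a) (Fin a) ℂ) ⊗ₖ P) * Wᴴ
    with hQdef
  have habsL : ∀ N : Matrix (Fin a) (Fin a) ℂ,
      Q * (W * (N ⊗ₖ P) * Wᴴ) = W * (N ⊗ₖ P) * Wᴴ := by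
    intro N
    rw [hQdef]
    calc (W * ((1 : Matrix (Fin a) (Fin a) ℂ) ⊗ₖ P) * Wᴴ) * (W * (N ⊗ₖ P) * Wᴴ)
        = W * (((1 : Matrix (Fin a) (Fin a) ℂ) ⊗ₖ P) * ((Wᴴ * W) * ((N ⊗ₖ P) * Wᴴ))) := by
          simp only [Matrix.mul_assoc]
      _ = W * (((1 : Matrix (Fin a) (Fin a) ℂ) ⊗ₖ P) * ((N ⊗ₖ P) * Wᴴ)) := by
          rw [hW, Matrix.one_mul]
      _ = W * ((((1 : Matrix (Fin a) (Fin a) ℂ) ⊗ₖ P) * (N ⊗ₖ P)) * Wᴴ) := by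
          rw [Matrix.mul_assoc]
      _ = W * ((N ⊗ₖ P) * Wᴴ) := by
          rw [← Matrix.mul_kronecker_mul, Matrix.one_mul, hPP]
      _ = W * (N ⊗ₖ P) * Wᴴ := by rw [Matrix.mul_assoc]
  have hQh : Qᴴ = Q := by
    have h1 : ((1 : Matrix (Fin a) (Fin a) ℂ) ⊗ₖ P)ᴴ = (1 : Matrix (Fin a) (Fin a) ℂ) ⊗ₖ P := by
      ext q q'
      simp only [conjTranspose_apply, kroneckerMap_apply]
      have e1 : star ((1 : Matrix (Fin a) (Fin a) ℂ) q'.1 q.1)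
          = (1 : Matrix (Fin a) (Fin a) ℂ) q.1 q'.1 := by
        rw [← conjTranspose_apply, conjTranspose_one]
      have e2 : star (P q'.2 q.2) = P q.2 q'.2 := by rw [← conjTranspose_apply, hPh]
      rw [star_mul', e1, e2]
    rw [hQdef]
    simp only [conjTranspose_mul, conjTranspose_conjTranspose, h1, Matrix.mul_assoc]
  -- decomposition of σA
  have hsplit : σA = (p k : ℂ) • vecMulVec (α k) (star (α k))
      + ∑ k' ∈ Finset.univ.erase k, (p k' : ℂ) • vecMulVec (α k') (star (α k')) := by
    rw [hσA]
    exact (Finset.add_sum_erase _ _ (Finset.mem_univ k)).symm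
  have hsumk : (∑ k' ∈ Finset.univ.erase k, (p k' : ℂ) • vecMulVec (α k') (star (α k'))) ⊗ₖ P
      = ∑ k' ∈ Finset.univ.erase k,
          (p k' : ℂ) • (vecMulVec (α k') (star (α k')) ⊗ₖ P) := by
    ext q q'
    simp only [kroneckerMap_apply, Matrix.sum_apply, Matrix.smul_apply, smul_eq_mul,
      Finset.sum_mul]
    exact Finset.sum_congr rfl fun l _ => by ring
  have hDpsd : ((∑ k' ∈ Finset.univ.erase k,
      (p k' : ℂ) • vecMulVec (α k') (star (α k'))) ⊗ₖ P).PosSemidef := by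
    rw [hsumk]
    refine Finset.sum_induction _ _ (fun x y hx hy => hx.add hy) Matrix.PosSemidef.zero ?_
    intro k' _
    exact fpc_psd_smul (hρPpsd k') (hp k').le
  -- the fixed-point equation gives a PSD difference
  have hG : W * (σA ⊗ₖ P) * Wᴴ
      = (p k : ℂ) • (W * (vecMulVec (α k) (star (α k)) ⊗ₖ P) * Wᴴ)
        + W * ((∑ k' ∈ Finset.univ.erase k,
            (p k' : ℂ) • vecMulVec (α k') (star (α k'))) ⊗ₖ P) * Wᴴ := by
    conv_lhs => rw [hsplit]
    rw [Matrix.add_kronecker, Matrix.smul_kronecker, Matrix.mul_add, Matrix.add_mul,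
      Matrix.mul_smul, Matrix.smul_mul]
  have hPsiD : Ψ (W * ((∑ k' ∈ Finset.univ.erase k,
        (p k' : ℂ) • vecMulVec (α k') (star (α k'))) ⊗ₖ P) * Wᴴ)
      = W * (σA ⊗ₖ P) * Wᴴ - (p k : ℂ) • X := by
    have h2 := congrArg Ψ hG
    rw [map_add, _root_.map_smul, hfix, ← hXdef] at h2
    rw [h2]
    abel
  have hGpk : (W * (σA ⊗ₖ P) * Wᴴ - (p k : ℂ) • X).PosSemidef := by
    rw [← hPsiD]
    exact hpos _ (hDpsd.mul_mul_conjTranspose_same W)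
  -- compression: (1-Q) X (1-Q) = 0
  have hQG : Q * (W * (σA ⊗ₖ P) * Wᴴ) = W * (σA ⊗ₖ P) * Wᴴ := habsL σA
  have hRG : (1 - Q) * (W * (σA ⊗ₖ P) * Wᴴ) = 0 := by
    rw [Matrix.sub_mul, Matrix.one_mul, hQG, sub_self]
  have hc1 : ((1 - Q) * ((p k : ℂ) • X) * (1 - Q)ᴴ).PosSemidef :=
    (fpc_psd_smul hXpsd (hp k).le).mul_mul_conjTranspose_same _
  have hc2 : (-((1 - Q) * ((p k : ℂ) • X) * (1 - Q)ᴴ)).PosSemidef := by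
    have h3 := hGpk.mul_mul_conjTranspose_same (1 - Q)
    have heq : (1 - Q) * (W * (σA ⊗ₖ P) * Wᴴ - (p k : ℂ) • X) * (1 - Q)ᴴ
        = -((1 - Q) * ((p k : ℂ) • X) * (1 - Q)ᴴ) := by
      rw [Matrix.mul_sub, hRG, zero_sub, Matrix.neg_mul]
    rwa [heq] at h3
  have h0 : (1 - Q) * ((p k : ℂ) • X) * (1 - Q)ᴴ = 0 := fpc_psd_neg_eq_zero hc1 hc2
  have hR : (1 - Q)ᴴ = 1 - Q := by rw [conjTranspose_sub, conjTranspose_one, hQh]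
  have h0' : (1 - Q) * X * (1 - Q) = 0 := by
    have h4 : (p k : ℂ) • ((1 - Q) * X * (1 - Q)) = 0 := by
      rw [← h0, hR, Matrix.mul_smul, Matrix.smul_mul]
    rcases smul_eq_zero.mp h4 with h | h
    · exact absurd (Complex.ofReal_eq_zero.mp h) (ne_of_gt (hp k))
    · exact h
  obtain ⟨C, hC⟩ : ∃ C : Matrix (Fin s) (Fin s) ℂ, X = Cᴴ * C := by
    open scoped MatrixOrder in
    obtain ⟨C, hC⟩ := CStarAlgebra.nonneg_iff_eq_star_mul_self.mp hXpsd.nonneg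
    exact ⟨C, hC⟩
  have hCR : C * (1 - Q) = 0 := by
    have h5 : (C * (1 - Q))ᴴ * (C * (1 - Q)) = 0 := by
      calc (C * (1 - Q))ᴴ * (C * (1 - Q))
          = (1 - Q) * (Cᴴ * C) * (1 - Q) := by
            rw [conjTranspose_mul, hR]
            simp only [Matrix.mul_assoc]
        _ = 0 := by rw [← hC, h0']
    exact Matrix.conjTranspose_mul_self_eq_zero.mp h5
  have hXR : X * (1 - Q) = 0 := by
    rw [hC, Matrix.mul_assoc, hCR, Matrix.mul_zero]
  have hXQ : X * Q = X := by
    have h6 := hXR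
    rw [Matrix.mul_sub, Matrix.mul_one] at h6
    exact (sub_eq_zero.mp h6).symm
  have hQX : Q * X = X := by
    have h7 : (X * (1 - Q))ᴴ = 0 := by rw [hXR, conjTranspose_zero]
    rw [conjTranspose_mul, hR, hXpsd.1.eq] at h7
    rw [Matrix.sub_mul, Matrix.one_mul] at h7
    exact (sub_eq_zero.mp h7).symm
  have hQXQ : Q * X * Q = X := by rw [Matrix.mul_assoc, hXQ, hQX]
  -- the compressed matrix
  set M : Matrix (Fin a × Fin b) (Fin a × Fin b) ℂ := Wᴴ * X * W with hMdef
  have hMpsd : M.PosSemidef := hXpsd.conjTranspose_mul_mul_same W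
  set σ' : Matrix (Fin a) (Fin a) ℂ :=
    Matrix.of fun i i' => ∑ l, ∑ l', star (ψ l) * M (i, l) (i', l') * ψ l' with hσ'def
  have hkey : ((1 : Matrix (Fin a) (Fin a) ℂ) ⊗ₖ P) * M * ((1 : Matrix (Fin a) (Fin a) ℂ) ⊗ₖ P)
      = σ' ⊗ₖ P := by
    ext q q'
    obtain ⟨i, j⟩ := q; obtain ⟨i', j'⟩ := q'
    simp only [hσ'def, Matrix.mul_apply, kroneckerMap_apply, Matrix.of_apply, Matrix.one_apply,
      Fintype.sum_prod_type, ite_mul, zero_mul, one_mul, mul_ite, mul_zero, mul_one,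
      Finset.sum_ite_irrel, Finset.sum_const_zero,
      Finset.sum_ite_eq, Finset.sum_ite_eq', Finset.mem_univ, if_true, hP, vecMulVec_apply,
      Pi.star_apply, Finset.sum_mul]
    rw [Finset.sum_comm]
    exact Finset.sum_congr rfl fun l _ => Finset.sum_congr rfl fun l' _ => by ring
  have hEdef : σ' = (Matrix.of fun (q : Fin a × Fin b) (i : Fin a) =>
        if q.1 = i then ψ q.2 else 0)ᴴ * M
      * (Matrix.of fun (q : Fin a × Fin b) (i : Fin a) => if q.1 = i then ψ q.2 else 0) := by
    ext i i'
    simp only [hσ'def, Matrix.mul_apply, conjTranspose_apply, Matrix.of_apply,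
      Fintype.sum_prod_type, fpc_star_ite, star_zero, ite_mul, zero_mul, mul_ite, mul_zero,
      Finset.sum_ite_irrel, Finset.sum_const_zero,
      Finset.sum_ite_eq, Finset.sum_ite_eq', Finset.mem_univ, if_true, Finset.sum_mul]
    rw [Finset.sum_comm]
  have hσ'psd : σ'.PosSemidef := by
    rw [hEdef]
    exact hMpsd.conjTranspose_mul_mul_same _
  have hfinal : X = W * (σ' ⊗ₖ P) * Wᴴ := by
    have h8 : Q * X * Q
        = W * (((1 : Matrix (Fin a) (Fin a) ℂ) ⊗ₖ P) * M * ((1 : Matrix (Fin a) (Fin a) ℂ) ⊗ₖ P))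
            * Wᴴ := by
      rw [hQdef, hMdef]
      simp only [Matrix.mul_assoc]
    rw [← hQXQ, h8, hkey]
  -- traces
  have htrW : ∀ A : Matrix (Fin a × Fin b) (Fin a × Fin b) ℂ, (W * A * Wᴴ).trace = A.trace := by
    intro A
    rw [Matrix.trace_mul_cycle, hW, Matrix.one_mul]
  have htrP : P.trace = 1 := by
    rw [hP, ← hψ']
    simp only [Matrix.trace, Matrix.diag_apply, vecMulVec_apply, Pi.star_apply]
    exact Finset.sum_congr rfl fun l _ => mul_comm _ _
  have htrρ : (vecMulVec (α k) (star (α k))).trace = 1 := by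
    have h9 := hα k k
    rw [if_pos rfl] at h9
    rw [← h9]
    simp only [Matrix.trace, Matrix.diag_apply, vecMulVec_apply, dotProduct, Pi.star_apply]
    exact Finset.sum_congr rfl fun l _ => mul_comm _ _
  have htrX : X.trace = 1 := by
    rw [hXdef, htr, htrW, Matrix.trace_kronecker, htrρ, htrP, mul_one]
  have htrσ' : σ'.trace = 1 := by
    have h10 : X.trace = σ'.trace * P.trace := by
      rw [hfinal, htrW, Matrix.trace_kronecker]
    rw [htrX, htrP, mul_one] at h10
    exact h10.symm
  exact ⟨σ', hσ'psd, htrσ', hfinal⟩
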